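/- Let A be a C*-algebra, X a semi-inner product A-module, and x, z ∈ X with ⟨x,z⟩ = 0, ⟨x,x⟩ ≠ 0 and ⟨z,z⟩ ≠ 0. Then for every y ∈ X the Ostrowski inequality ⟨y,z⟩⟨z,y⟩ ≤ (‖z‖²/‖x‖²) · (‖x‖²⟨y,y⟩ − ⟨y,x⟩⟨x,y⟩) holds in A. -/

import Mathlib

/-- A semi-inner product `A`-module: a right `A`-module `X` (which is also a complex
vector space, with compatible actions) together with an `A`-valued semi-inner product. -/
structure SemiInnerProductModule (A : Type*) (X : Type*)
    [NonUnitalCStarAlgebra A] [PartialOrder A] [StarOrderedRing A]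
    [AddCommGroup X] [Module ℂ X] where
  /-- the right action of `A` on `X` -/
  rsmul : X → A → X
  /-- the `A`-valued semi-inner product -/
  inner : X → X → A
  add_rsmul : ∀ (x y : X) (a : A), rsmul (x + y) a = rsmul x a + rsmul y a
  rsmul_add : ∀ (x : X) (a b : A), rsmul x (a + b) = rsmul x a + rsmul x b
  rsmul_mul : ∀ (x : X) (a b : A), rsmul (rsmul x a) b = rsmul x (a * b)
  smul_rsmul : ∀ (c : ℂ) (x : X) (a : A), rsmul (c • x) a = c • rsmul x a
  rsmul_smul : ∀ (c : ℂ) (x : X) (a : A), rsmul x (c • a) = c • rsmul x a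
  inner_add : ∀ (x y z : X), inner x (y + z) = inner x y + inner x z
  inner_smul : ∀ (c : ℂ) (x y : X), inner x (c • y) = c • inner x y
  inner_rsmul : ∀ (x y : X) (a : A), inner x (rsmul y a) = inner x y * a
  star_inner : ∀ (x y : X), star (inner x y) = inner y x
  inner_self_nonneg : ∀ x : X, 0 ≤ inner x x

/-- Positivity of a matrix as an element of the C⋆-algebra `Mₙ(A)`:
a matrix is positive iff it is of the form `bᴴ * b`. -/
def Matrix.IsPosElem {A : Type*} {n : ℕ} [NonUnitalCStarAlgebra A]
    (M : Matrix (Fin n) (Fin n) A) : Prop :=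
  ∃ b : Matrix (Fin n) (Fin n) A, M = b.conjTranspose * b


namespace SemiInnerProductModule
variable {A X : Type*} [NonUnitalCStarAlgebra A] [PartialOrder A] [StarOrderedRing A]
  [AddCommGroup X] [Module ℂ X] (P : SemiInnerProductModule A X)

lemma inner_zero (x : X) : P.inner x 0 = 0 := by
  have h := P.inner_add x 0 0
  rw [add_zero] at h
  exact (left_eq_add.mp h)

lemma inner_neg (x y : X) : P.inner x (-y) = - P.inner x y := by
  have h := P.inner_add x y (-y)
  rw [add_neg_cancel, P.inner_zero] at h
  exact (eq_neg_of_add_eq_zero_right h.symm)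

lemma inner_sub (x y z : X) : P.inner x (y - z) = P.inner x y - P.inner x z := by
  rw [sub_eq_add_neg, P.inner_add, P.inner_neg, sub_eq_add_neg]

lemma inner_rsmul_left (x y : X) (a : A) :
    P.inner (P.rsmul x a) y = star a * P.inner x y := by
  calc P.inner (P.rsmul x a) y = star (P.inner y (P.rsmul x a)) := (P.star_inner _ _).symm
    _ = star (P.inner y x * a) := by rw [P.inner_rsmul]
    _ = star a * P.inner x y := by rw [star_mul, P.star_inner]

lemma inner_real_smul (r : ℝ) (x y : X) : P.inner x (r • y) = r • P.inner x y := by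
  rw [← Complex.coe_smul, P.inner_smul, Complex.coe_smul]

lemma inner_real_smul_left (r : ℝ) (x y : X) : P.inner (r • x) y = r • P.inner x y := by
  calc P.inner (r • x) y = star (P.inner y (r • x)) := (P.star_inner _ _).symm
    _ = star (r • P.inner y x) := by rw [P.inner_real_smul]
    _ = r • P.inner x y := by rw [star_smul, star_trivial, P.star_inner]

lemma inner_sub_left (x y z : X) : P.inner (x - y) z = P.inner x z - P.inner y z := by
  calc P.inner (x - y) z = star (P.inner z (x - y)) := (P.star_inner _ _).symm
    _ = star (P.inner z x - P.inner z y) := by rw [P.inner_sub]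
    _ = _ := by rw [star_sub, P.star_inner, P.star_inner]

lemma isSelfAdjoint_inner_self (x : X) : IsSelfAdjoint (P.inner x x) := P.star_inner x x

/-- Cauchy–Schwarz. -/
lemma cs (u v : X) (hu : 0 < ‖P.inner u u‖) :
    P.inner v u * P.inner u v ≤ ‖P.inner u u‖ • P.inner v v := by
  set β := ‖P.inner u u‖ with hβ
  set a := P.inner u v with ha
  have hstar : P.inner v u = star a := (P.star_inner u v).symm
  have h0 : (0:A) ≤ P.inner (P.rsmul u a - β • v) (P.rsmul u a - β • v) :=
    P.inner_self_nonneg _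
  have hexp : P.inner (P.rsmul u a - β • v) (P.rsmul u a - β • v)
      = star a * (P.inner u u) * a - β • (star a * a) - β • (star a * a)
        + β • (β • P.inner v v) := by
    simp only [P.inner_sub_left, P.inner_sub, P.inner_real_smul, P.inner_real_smul_left,
      P.inner_rsmul, P.inner_rsmul_left, hstar, ← ha, ← mul_assoc]
    module
  have hconj : star a * (P.inner u u) * a ≤ β • (star a * a) :=
    CStarAlgebra.star_left_conjugate_le_norm_smul (P.isSelfAdjoint_inner_self u)
  have h1 : β • (star a * a) ≤ β • (β • P.inner v v) := by
    rw [hexp] at h0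
    have := add_le_add_left (sub_le_sub_right (sub_le_sub_right hconj (β • (star a * a)))
      (β • (star a * a))) (β • (β • P.inner v v))
    have h2 := h0.trans this
    simpa [sub_sub, ← sub_add] using h2
  rw [hstar]
  exact (smul_le_smul_iff_of_pos_left hu).mp h1

end SemiInnerProductModule

/-- The Ostrowski inequality in a semi-inner product `C*`-module: if `⟨x,z⟩ = 0`,
`⟨x,x⟩ ≠ 0` and `⟨z,z⟩ ≠ 0`, then
`⟨y,z⟩⟨z,y⟩ ≤ (‖z‖²/‖x‖²) · (‖x‖²⟨y,y⟩ − ⟨y,x⟩⟨x,y⟩)`,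
where `‖x‖² = ‖⟨x,x⟩‖` and `‖z‖² = ‖⟨z,z⟩‖`. -/
theorem ostrowski_ineq {A X : Type*}
    [NonUnitalCStarAlgebra A] [PartialOrder A] [StarOrderedRing A]
    [AddCommGroup X] [Module ℂ X]
    (P : SemiInnerProductModule A X) (x z : X)
    (hxz : P.inner x z = 0) (hx : P.inner x x ≠ 0) (hz : P.inner z z ≠ 0)
    (y : X) :
    P.inner y z * P.inner z y ≤
      (‖P.inner z z‖ / ‖P.inner x x‖) •
        (‖P.inner x x‖ • P.inner y y - P.inner y x * P.inner x y) := by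
  set α := ‖P.inner x x‖ with hα
  set β := ‖P.inner z z‖ with hβ
  have hαpos : 0 < α := norm_pos_iff.mpr hx
  have hβpos : 0 < β := norm_pos_iff.mpr hz
  set a := P.inner x y with ha
  have hya : P.inner y x = star a := (P.star_inner x y).symm
  set w := α • y - P.rsmul x a with hw
  have hzx : P.inner z x = 0 := by
    rw [← P.star_inner, hxz, star_zero]
  have hzw : P.inner z w = α • P.inner z y := by
    rw [hw, P.inner_sub, P.inner_real_smul, P.inner_rsmul, hzx, zero_mul, sub_zero]
  have hwz : P.inner w z = α • P.inner y z := by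
    rw [← P.star_inner, hzw, star_smul, star_trivial, P.star_inner]
  have hww : P.inner w w ≤ α • (α • P.inner y y - star a * a) := by
    have hexp : P.inner w w
        = star a * P.inner x x * a - α • (star a * a) - α • (star a * a)
          + α • (α • P.inner y y) := by
      rw [hw]
      simp only [P.inner_sub_left, P.inner_sub, P.inner_real_smul, P.inner_real_smul_left,
        P.inner_rsmul, P.inner_rsmul_left, hya, ← ha, ← mul_assoc]
      module
    have hconj : star a * P.inner x x * a ≤ α • (star a * a) :=
      CStarAlgebra.star_left_conjugate_le_norm_smul (P.isSelfAdjoint_inner_self x)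
    rw [hexp]
    have hre : α • (α • P.inner y y - star a * a)
        = α • (star a * a) - α • (star a * a) - α • (star a * a)
          + α • (α • P.inner y y) := by module
    rw [hre]
    exact add_le_add_left (sub_le_sub_right (sub_le_sub_right hconj _) _) _
  have hcs := P.cs z w hβpos
  rw [hwz, hzw] at hcs
  have hL : (α • P.inner y z) * (α • P.inner z y)
      = (α*α) • (P.inner y z * P.inner z y) := by
    rw [smul_mul_assoc, mul_smul_comm, smul_smul]
  rw [hL] at hcs
  have h2 : (α*α) • (P.inner y z * P.inner z y)
      ≤ (β*α) • (α • P.inner y y - star a * a) := by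
    refine hcs.trans ?_
    rw [mul_smul]
    exact smul_le_smul_of_nonneg_left hww hβpos.le
  rw [hya]
  rw [← smul_le_smul_iff_of_pos_left (mul_pos hαpos hαpos), smul_smul]
  have hsc : (α*α) * (β/α) = β*α := by field_simp
  rw [hsc]
  exact h2
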